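/- (Parameter choice in the proof of Theorem 2) Let 0 < λ̲ ≤ λ̄ be real numbers, set κ̄ = λ̄/λ̲, let n ≥ 0 and 1 ≤ p ≤ n+1 be integers. Define η = (λ̄ λ̲)^{-1/2}, β = 1 − p/((n+1)√κ̄), and let α ∈ (0,1) be determined by (1−α)/α = (n+1) λ̄ η / p. Then β ∈ [0,1) and the inequality (1−β)/λ̲ − 2η (p/(n+1)) (1 + β(1−α)/(2α)) + λ̄ η² ≤ 0 holds. -/

import Mathlib

/-- **parameter choice in the proof of Theorem 2.** For real numbers
`0 < λ̲ ≤ λ̄`, `κ̄ = λ̄/λ̲`, integers `n ≥ 0` and `1 ≤ p ≤ n+1`, with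
`η = (λ̄λ̲)^{-1/2}`, `β = 1 − p/((n+1)√κ̄)`, and `α ∈ (0,1)` determined by
`(1−α)/α = (n+1)λ̄η/p`, one has `β ∈ [0,1)` and
`(1−β)/λ̲ − 2η(p/(n+1))(1 + β(1−α)/(2α)) + λ̄η² ≤ 0`. -/
theorem accelerated_parameter_choice
    (ll lb : ℝ) (hll : 0 < ll) (hllb : ll ≤ lb)
    (n p : ℕ) (hp1 : 1 ≤ p) (hp2 : p ≤ n + 1)
    (η : ℝ) (hη : η = (Real.sqrt (lb * ll))⁻¹)
    (α : ℝ) (hα : α ∈ Set.Ioo (0 : ℝ) 1)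
    (hαeq : (1 - α) / α = (n + 1) * lb * η / p)
    (β : ℝ) (hβ : β = 1 - (p : ℝ) / ((n + 1) * Real.sqrt (lb / ll))) :
    β ∈ Set.Ico (0 : ℝ) 1 ∧
      (1 - β) / ll - 2 * η * ((p : ℝ) / (n + 1)) * (1 + β * (1 - α) / (2 * α)) +
          lb * η ^ 2 ≤ 0 := by
  have hlb : 0 < lb := lt_of_lt_of_le hll hllb
  set s := Real.sqrt (lb * ll) with hsdef
  have hs : 0 < s := Real.sqrt_pos.mpr (by positivity)
  have hs2 : s ^ 2 = lb * ll := Real.sq_sqrt (by positivity)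
  have hsq : Real.sqrt (lb / ll) = s / ll := by
    rw [show lb / ll = (s / ll) ^ 2 by field_simp; nlinarith [hs2],
      Real.sqrt_sq (by positivity)]
  have hppos : (0 : ℝ) < p := by exact_mod_cast hp1
  have hnpos : (0 : ℝ) < (n : ℝ) + 1 := by positivity
  have hpn : (p : ℝ) ≤ (n : ℝ) + 1 := by exact_mod_cast hp2
  have hlls : ll ≤ s := by nlinarith [hs2]
  have hβ' : β = 1 - (p : ℝ) * ll / (((n : ℝ) + 1) * s) := by
    rw [hβ, hsq]; field_simp
  have hα0 := hα.1
  have h2 : β * (1 - α) / (2 * α) = β * (((n : ℝ) + 1) * lb * η / p) / 2 := by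
    rw [mul_comm 2 α, ← div_div, mul_div_assoc, hαeq]
  constructor
  · constructor
    · rw [hβ']
      have : (p : ℝ) * ll / (((n : ℝ) + 1) * s) ≤ 1 := by
        rw [div_le_one (by positivity)]
        nlinarith
      linarith
    · rw [hβ']
      have : 0 < (p : ℝ) * ll / (((n : ℝ) + 1) * s) := by positivity
      linarith
  · rw [h2, hβ', hη]
    have key : (1 - (1 - (p : ℝ) * ll / (((n : ℝ) + 1) * s))) / ll -
        2 * s⁻¹ * ((p : ℝ) / ((n : ℝ) + 1)) *
          (1 + (1 - (p : ℝ) * ll / (((n : ℝ) + 1) * s)) *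
            (((n : ℝ) + 1) * lb * s⁻¹ / p) / 2) + lb * (s⁻¹) ^ 2 = 0 := by
      field_simp
      linear_combination (-(p:ℝ) * ll) * hs2
    linarith [key.le]
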